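/- arXiv:2211.03363 — 2 statements merged into one kernel-verified Lean document; each statement's English description precedes it below -/
import Mathlib

section
/- Let $K\ge 1$, let $t_0\le t$ be integers with $t-t_0\le E$ for an integer $E\ge 0$, and let $(\eta_i)_{i\ge 0}$ be a nonincreasing sequence of positive reals with $\eta_{t_0}\le 2\eta_t$. On a probability space, for each client $k\in\{1,\dots,K\}$ let $\theta_k^{t_0},\theta_k^{t_0+1},\dots,\theta_k^{t}$ be square-integrable random vectors in $\mathbb{R}^d$ satisfying $\theta_k^{i+1}=\theta_k^{i}-\eta_i g_k^{i}$ for random vectors $g_k^i$ with $\mathbb{E}\|g_k^i\|^2\le G^2$, and suppose all clients are synchronized at time $t_0$, i.e. $\theta_1^{t_0}=\dots=\theta_K^{t_0}$. Let $\bar\theta^t=\tfrac{1}{K}\sum_{k=1}^K\theta_k^t$. Then $\tfrac{1}{K}\sum_{k=1}^{K}\mathbb{E}\big\|\bar\theta^t-\theta_k^t\big\|^2\le 4E^2\eta_t^2G^2$. -/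
open MeasureTheory Finset

lemma mean_min_sq {V : Type*} [NormedAddCommGroup V] [InnerProductSpace ℝ V]
    {K : ℕ} (hK : 1 ≤ K) (x : Fin K → V) (c : V) :
    ∑ k, ‖(1 / (K:ℝ)) • (∑ k', x k') - x k‖ ^ 2 ≤ ∑ k, ‖c - x k‖ ^ 2 := by
  set m := (1 / (K:ℝ)) • (∑ k', x k') with hm
  have hKne : (K:ℝ) ≠ 0 := by positivity
  have hsum : ∑ k, (m - x k) = 0 := by
    rw [Finset.sum_sub_distrib, Finset.sum_const, card_univ, Fintype.card_fin, hm,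
      ← Nat.cast_smul_eq_nsmul ℝ, smul_smul]
    rw [mul_one_div, div_self hKne, one_smul, sub_self]
  have key : ∀ k : Fin K, ‖c - x k‖^2 = ‖c - m‖^2 + 2 * inner ℝ (c - m) (m - x k) + ‖m - x k‖^2 := by
    intro k
    have : c - x k = (c - m) + (m - x k) := by abel
    rw [this, norm_add_sq_real]
  calc ∑ k, ‖m - x k‖ ^ 2 ≤ ∑ k, ‖c - m‖^2 + (2 * inner ℝ (c - m) (∑ k, (m - x k)) : ℝ)
        + ∑ k, ‖m - x k‖^2 := by
        rw [hsum, inner_zero_right, mul_zero, add_zero]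
        have : (0:ℝ) ≤ ∑ k : Fin K, ‖c - m‖^2 := by positivity
        linarith
    _ = ∑ k, ‖c - x k‖ ^ 2 := by
        rw [inner_sum, Finset.mul_sum, ← Finset.sum_add_distrib, ← Finset.sum_add_distrib]
        exact Finset.sum_congr rfl fun k _ => (key k).symm

lemma norm_sum_sq_le {V : Type*} [NormedAddCommGroup V]
    {ι : Type*} (s : Finset ι) (v : ι → V) :
    ‖∑ i ∈ s, v i‖ ^ 2 ≤ (s.card : ℝ) * ∑ i ∈ s, ‖v i‖ ^ 2 := by
  calc ‖∑ i ∈ s, v i‖ ^ 2 ≤ (∑ i ∈ s, ‖v i‖) ^ 2 := by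
        apply pow_le_pow_left₀ (norm_nonneg _) (norm_sum_le _ _)
    _ ≤ (s.card : ℝ) * ∑ i ∈ s, ‖v i‖ ^ 2 := by
        have := sq_sum_le_card_mul_sum_sq (s := s) (f := fun i => ‖v i‖)
        push_cast at this ⊢
        linarith

/-- Client-drift bound (equation (16) of the paper): between two aggregation
rounds separated by at most `E` local SGD epochs with stochastic gradients of
second moment bounded by `G^2`, the average squared deviation of the local
models from their mean is at most `4 E^2 (η t)^2 G^2`. -/
theorem stmt_7 {Ω : Type*} [MeasurableSpace Ω] (P : Measure Ω) [IsProbabilityMeasure P]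
    (d K : ℕ) (hK : 1 ≤ K) (t₀ t E : ℕ) (ht₀ : t₀ ≤ t) (htE : t - t₀ ≤ E)
    (η : ℕ → ℝ) (hηpos : ∀ i, 0 < η i) (hηmono : ∀ i j, i ≤ j → η j ≤ η i)
    (hη2 : η t₀ ≤ 2 * η t) (G : ℝ)
    (θ g : Fin K → ℕ → Ω → EuclideanSpace ℝ (Fin d))
    (hθL2 : ∀ k i, MemLp (θ k i) 2 P) (hgL2 : ∀ k i, MemLp (g k i) 2 P)
    (hupd : ∀ k, ∀ i, t₀ ≤ i → i < t →
      θ k (i + 1) = fun ω => θ k i ω - η i • g k i ω)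
    (hg : ∀ k, ∀ i, t₀ ≤ i → i < t → ∫ ω, ‖g k i ω‖ ^ 2 ∂P ≤ G ^ 2)
    (hsync : ∀ k k', θ k t₀ = θ k' t₀) :
    (1 / (K : ℝ)) *
        ∑ k, ∫ ω, ‖(1 / (K : ℝ)) • (∑ k', θ k' t ω) - θ k t ω‖ ^ 2 ∂P ≤
      4 * (E : ℝ) ^ 2 * (η t) ^ 2 * G ^ 2 := by
  set n := t - t₀ with hn
  have k0 : Fin K := ⟨0, hK⟩
  -- telescoping
  have htel : ∀ k ω, θ k t ω = θ k t₀ ω - ∑ i ∈ Finset.Ico t₀ t, η i • g k i ω := by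
    intro k ω
    have H : ∀ m, t₀ ≤ m → m ≤ t →
        θ k m ω = θ k t₀ ω - ∑ i ∈ Finset.Ico t₀ m, η i • g k i ω := by
      intro m hm
      induction m, hm using Nat.le_induction with
      | base => intro _; simp
      | succ m hm ih =>
        intro hmt
        have hmt' : m < t := hmt
        rw [hupd k m hm hmt']
        dsimp only
        rw [ih (le_of_lt hmt'), Finset.sum_Ico_succ_top hm]
        abel
    exact H t ht₀ le_rfl
  -- pointwise bound on the sum
  have hpt : ∀ ω, ∑ k, ‖(1 / (K : ℝ)) • (∑ k', θ k' t ω) - θ k t ω‖ ^ 2 ≤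
      ∑ k, (n : ℝ) * ∑ i ∈ Finset.Ico t₀ t, (η i)^2 * ‖g k i ω‖ ^ 2 := by
    intro ω
    have h1 := mean_min_sq hK (fun k => θ k t ω) (θ k0 t₀ ω)
    refine h1.trans (Finset.sum_le_sum fun k _ => ?_)
    have hc : θ k0 t₀ ω - θ k t ω = ∑ i ∈ Finset.Ico t₀ t, η i • g k i ω := by
      rw [htel k ω, hsync k0 k]; abel
    rw [hc]
    refine (norm_sum_sq_le _ _).trans ?_
    rw [Nat.card_Ico]
    refine mul_le_mul_of_nonneg_left (Finset.sum_le_sum ?_) (by positivity)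
    intro i hi
    rw [norm_smul, mul_pow, Real.norm_eq_abs, sq_abs]
  -- integrability
  have hInt : ∀ (k : Fin K) i, t₀ ≤ i → i < t →
      Integrable (fun ω => ‖g k i ω‖ ^ 2) P := fun k i _ _ =>
    (hgL2 k i).norm.integrable_sq
  have hIntR : Integrable (fun ω => ∑ k, (n : ℝ) *
      ∑ i ∈ Finset.Ico t₀ t, (η i)^2 * ‖g k i ω‖ ^ 2) P := by
    apply integrable_finset_sum
    intro k _
    apply Integrable.const_mul
    apply integrable_finset_sum
    intro i hi
    rw [Finset.mem_Ico] at hi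
    exact (hInt k i hi.1 hi.2).const_mul _
  have hIntL : ∀ k : Fin K, Integrable
      (fun ω => ‖(1 / (K : ℝ)) • (∑ k', θ k' t ω) - θ k t ω‖ ^ 2) P := by
    intro k
    have heq : (fun ω => (1 / (K : ℝ)) • (∑ k', θ k' t ω) - θ k t ω) =
        ((1 / (K : ℝ)) • ∑ k', θ k' t) - θ k t := by
      funext ω; simp [Finset.sum_apply]
    have h2 : MemLp (fun ω => (1 / (K : ℝ)) • (∑ k', θ k' t ω) - θ k t ω) 2 P := by
      rw [heq]
      exact ((memLp_finset_sum' _ (fun k' _ => hθL2 k' t)).const_smul _).sub (hθL2 k t)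
    exact h2.norm.integrable_sq
  -- combine integrals
  have hswap : ∑ k, ∫ ω, ‖(1 / (K : ℝ)) • (∑ k', θ k' t ω) - θ k t ω‖ ^ 2 ∂P =
      ∫ ω, ∑ k, ‖(1 / (K : ℝ)) • (∑ k', θ k' t ω) - θ k t ω‖ ^ 2 ∂P :=
    (integral_finset_sum _ fun k _ => hIntL k).symm
  have hmain : ∑ k, ∫ ω, ‖(1 / (K : ℝ)) • (∑ k', θ k' t ω) - θ k t ω‖ ^ 2 ∂P ≤
      (K : ℝ) * ((n : ℝ)^2 * (η t₀)^2 * G^2) := by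
    rw [hswap]
    have step1 : ∫ ω, ∑ k, ‖(1 / (K : ℝ)) • (∑ k', θ k' t ω) - θ k t ω‖ ^ 2 ∂P ≤
        ∫ ω, ∑ k, (n : ℝ) * ∑ i ∈ Finset.Ico t₀ t, (η i)^2 * ‖g k i ω‖ ^ 2 ∂P := by
      apply integral_mono_of_nonneg
      · filter_upwards with ω
        exact Finset.sum_nonneg fun k _ => by positivity
      · exact hIntR
      · filter_upwards with ω using hpt ω
    refine step1.trans ?_
    rw [integral_finset_sum _ fun k _ => by
      apply Integrable.const_mul
      apply integrable_finset_sum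
      intro i hi
      rw [Finset.mem_Ico] at hi
      exact (hInt k i hi.1 hi.2).const_mul _]
    have hbound : ∀ k : Fin K,
        ∫ ω, (n : ℝ) * ∑ i ∈ Finset.Ico t₀ t, (η i)^2 * ‖g k i ω‖ ^ 2 ∂P ≤
        (n : ℝ)^2 * (η t₀)^2 * G^2 := by
      intro k
      rw [integral_const_mul, integral_finset_sum _ fun i hi => by
        rw [Finset.mem_Ico] at hi
        exact (hInt k i hi.1 hi.2).const_mul _]
      have hterm : ∀ i ∈ Finset.Ico t₀ t,
          ∫ ω, (η i)^2 * ‖g k i ω‖ ^ 2 ∂P ≤ (η t₀)^2 * G^2 := by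
        intro i hi
        rw [Finset.mem_Ico] at hi
        rw [integral_const_mul]
        have h3 : (0:ℝ) ≤ ∫ ω, ‖g k i ω‖ ^ 2 ∂P :=
          integral_nonneg fun ω => by positivity
        have h4 : (η i)^2 ≤ (η t₀)^2 := by
          have := hηmono t₀ i hi.1
          have := (hηpos i).le
          nlinarith
        have h5 := hg k i hi.1 hi.2
        nlinarith [sq_nonneg (η i)]
      calc (n:ℝ) * ∑ i ∈ Finset.Ico t₀ t, ∫ ω, (η i)^2 * ‖g k i ω‖ ^ 2 ∂P ≤
          (n:ℝ) * ∑ i ∈ Finset.Ico t₀ t, (η t₀)^2 * G^2 := by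
            apply mul_le_mul_of_nonneg_left (Finset.sum_le_sum hterm) (by positivity)
        _ = (n : ℝ)^2 * (η t₀)^2 * G^2 := by
            rw [Finset.sum_const, Nat.card_Ico, ← hn]
            ring
    calc ∑ k : Fin K, ∫ ω, (n : ℝ) * ∑ i ∈ Finset.Ico t₀ t, (η i)^2 * ‖g k i ω‖ ^ 2 ∂P
        ≤ ∑ k : Fin K, ((n : ℝ)^2 * (η t₀)^2 * G^2) := Finset.sum_le_sum fun k _ => hbound k
      _ = (K : ℝ) * ((n : ℝ)^2 * (η t₀)^2 * G^2) := by
          rw [Finset.sum_const, card_univ, Fintype.card_fin, nsmul_eq_mul]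
  -- final arithmetic
  have hKpos : (0:ℝ) < K := by exact_mod_cast hK
  have hG2 : (0:ℝ) ≤ G^2 := sq_nonneg G
  have h6 := mul_le_mul_of_nonneg_left hmain (by positivity : (0:ℝ) ≤ 1 / (K:ℝ))
  have hKne : (K:ℝ) ≠ 0 := ne_of_gt hKpos
  have h7 : (1 / (K:ℝ)) * ((K : ℝ) * ((n : ℝ)^2 * (η t₀)^2 * G^2)) =
      (n : ℝ)^2 * (η t₀)^2 * G^2 := by field_simp
  rw [h7] at h6
  refine h6.trans ?_
  have hnE : (n : ℝ) ≤ (E : ℝ) := by exact_mod_cast htE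
  have hn0 : (0:ℝ) ≤ (n : ℝ) := Nat.cast_nonneg _
  have hη0 : 0 < η t₀ := hηpos t₀
  have hηsq : (η t₀)^2 ≤ 4 * (η t)^2 := by nlinarith
  have hnsq : (n : ℝ)^2 ≤ (E : ℝ)^2 := by nlinarith
  calc (n : ℝ)^2 * (η t₀)^2 * G^2 ≤ (E : ℝ)^2 * (4 * (η t)^2) * G^2 := by
        apply mul_le_mul_of_nonneg_right _ hG2
        exact mul_le_mul hnsq hηsq (sq_nonneg _) (sq_nonneg _)
    _ = 4 * (E : ℝ)^2 * (η t)^2 * G^2 := by ring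
end

section
/- Let $d\ge 1$, $K\ge 1$ and $C\ge 1$ be integers. For $k=1,\dots,K$ let $f_k:\mathbb{R}^d\to\mathbb{R}$ be differentiable, $L$-smooth (gradient $L$-Lipschitz) and $\mu$-strongly convex, set $F=\tfrac{1}{K}\sum_{k=1}^K f_k$, let $\theta^*$ be the minimizer of $F$ with $F^*=F(\theta^*)$, let $f_k^*=\inf f_k$, and define the heterogeneity gap $\Gamma=F^*-\tfrac{1}{K}\sum_{k=1}^K f_k^*$. Let $\tilde\theta_c,\theta_1,\dots,\theta_K,\tilde\theta_1,\dots,\tilde\theta_C\in\mathbb{R}^d$, let $W_1,\dots,W_C$ be real numbers, set $\bar g=\tfrac{1}{K}\sum_{k=1}^K\nabla f_k(\theta_k)$, and let $0<\eta\le\tfrac{1}{6L}$. Then $\Big\|\tilde\theta_c+\sum_{j=1}^C W_j\tilde\theta_j-\eta\bar g-\theta^*\Big\|^2\le(2-\mu\eta)\|\tilde\theta_c-\theta^*\|^2+3\Big\|\sum_{j=1}^C W_j\tilde\theta_j\Big\|^2+\tfrac{2}{K}\sum_{k=1}^K\|\tilde\theta_c-\theta_k\|^2+6L\eta^2\Gamma-\tfrac{5\eta}{3}\big(F(\tilde\theta_c)-F^*\big)$.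 -/
open Real RealInnerProductSpace

section AuxLemmas

variable {E : Type*} [NormedAddCommGroup E] [InnerProductSpace ℝ E] [CompleteSpace E]


lemma line_hasDerivAt (f : E → ℝ) (hf : Differentiable ℝ f) (x u : E) (t : ℝ) :
    HasDerivAt (fun s : ℝ => f (x + s • u)) ⟪gradient f (x + t • u), u⟫ t := by
  have h1 : HasDerivAt (fun s : ℝ => x + s • u) u t := by
    simpa using ((hasDerivAt_id t).smul_const u).const_add x
  have h2 : HasFDerivAt f ((InnerProductSpace.toDual ℝ E) (gradient f (x + t • u))) (x + t • u) :=
    hasGradientAt_iff_hasFDerivAt.mp (hf _).hasGradientAt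
  simpa [InnerProductSpace.toDual_apply_apply, Function.comp_def] using h2.comp_hasDerivAt t h1

lemma grad_ineq (f : E → ℝ) (hf : Differentiable ℝ f) (hc : ConvexOn ℝ Set.univ f) (x y : E) :
    f x + ⟪gradient f x, y - x⟫ ≤ f y := by
  set φ : ℝ → ℝ := fun s => f (x + s • (y - x)) with hφdef
  have hφ : ConvexOn ℝ Set.univ φ := by
    have := hc.comp_affineMap (AffineMap.lineMap x y : ℝ →ᵃ[ℝ] E)
    have he : φ = f ∘ (AffineMap.lineMap x y : ℝ →ᵃ[ℝ] E) := by
      funext s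
      simp [hφdef, AffineMap.lineMap_apply, add_comm]
    rw [he]
    simpa using this
  have hd0 : HasDerivAt φ ⟪gradient f x, y - x⟫ 0 := by
    simpa using line_hasDerivAt f hf x (y - x) 0
  have := hφ.le_slope_of_hasDerivAt (Set.mem_univ (0:ℝ)) (Set.mem_univ (1:ℝ)) one_pos hd0
  have hs : slope φ 0 1 = f y - f x := by
    simp [slope_def_field, hφdef]
  rw [hs] at this
  linarith

lemma descent (f : E → ℝ) (hf : Differentiable ℝ f) {L : ℝ} (hL : 0 < L)
    (hlip : LipschitzWith L.toNNReal (gradient f)) (x y : E) :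
    f y ≤ f x + ⟪gradient f x, y - x⟫ + L / 2 * ‖y - x‖ ^ 2 := by
  set u := y - x with hu
  set φ' : ℝ → ℝ := fun t => ⟪gradient f (x + t • u), u⟫ with hφ'
  have hcontg : Continuous (gradient f) := hlip.continuous
  have hcont : Continuous φ' := by
    apply Continuous.inner
    · exact hcontg.comp (by continuity)
    · exact continuous_const
  have hderiv : ∀ t ∈ Set.uIcc (0:ℝ) 1, HasDerivAt (fun s : ℝ => f (x + s • u)) (φ' t) t :=
    fun t _ => line_hasDerivAt f hf x u t
  have key : f (x + (1:ℝ) • u) - f (x + (0:ℝ) • u) = ∫ t in (0:ℝ)..1, φ' t := by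
    exact (intervalIntegral.integral_eq_sub_of_hasDerivAt hderiv
      (hcont.intervalIntegrable 0 1)).symm
  have hbound : ∫ t in (0:ℝ)..1, φ' t ≤ ∫ t in (0:ℝ)..1, (φ' 0 + L * ‖u‖ ^ 2 * t) := by
    apply intervalIntegral.integral_mono_on zero_le_one (hcont.intervalIntegrable 0 1)
      ((by fun_prop : Continuous fun t : ℝ => φ' 0 + L * ‖u‖ ^ 2 * t).intervalIntegrable 0 1)
    intro t ht
    have h1 : φ' t - φ' 0 = ⟪gradient f (x + t • u) - gradient f (x + (0:ℝ) • u), u⟫ := by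
      rw [inner_sub_left]
    have h2 : ⟪gradient f (x + t • u) - gradient f (x + (0:ℝ) • u), u⟫ ≤
        ‖gradient f (x + t • u) - gradient f (x + (0:ℝ) • u)‖ * ‖u‖ := real_inner_le_norm _ _
    have h3 : ‖gradient f (x + t • u) - gradient f (x + (0:ℝ) • u)‖ ≤ L * (t * ‖u‖) := by
      have := hlip.dist_le_mul (x + t • u) (x + (0:ℝ) • u)
      rw [dist_eq_norm, dist_eq_norm] at this
      calc ‖gradient f (x + t • u) - gradient f (x + (0:ℝ) • u)‖
          ≤ L.toNNReal * ‖(x + t • u) - (x + (0:ℝ) • u)‖ := this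
        _ = L * (t * ‖u‖) := by
            rw [Real.coe_toNNReal _ hL.le]
            congr 1
            have : (x + t • u) - (x + (0:ℝ) • u) = t • u := by module
            rw [this, norm_smul, Real.norm_eq_abs, abs_of_nonneg ht.1]
    nlinarith [norm_nonneg u, ht.1, sq_nonneg (‖u‖)]
  have hint : ∫ t in (0:ℝ)..1, (φ' 0 + L * ‖u‖ ^ 2 * t) = φ' 0 + L / 2 * ‖u‖ ^ 2 := by
    rw [intervalIntegral.integral_add (intervalIntegrable_const)
      ((by fun_prop : Continuous fun t : ℝ => L * ‖u‖ ^ 2 * t).intervalIntegrable 0 1),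
      intervalIntegral.integral_const_mul, integral_id]
    simp; ring
  have h0 : φ' 0 = ⟪gradient f x, u⟫ := by simp [hφ']
  have e1 : x + (1:ℝ) • u = y := by rw [hu]; module
  have e0 : x + (0:ℝ) • u = x := by module
  rw [e1, e0] at key
  linarith [key, hbound.trans_eq hint, h0.symm.le]

lemma grad_sq (f : E → ℝ) (hf : Differentiable ℝ f) {L : ℝ} (hL : 0 < L)
    (hlip : LipschitzWith L.toNNReal (gradient f)) (hbdd : BddBelow (Set.range f)) (x : E) :
    ‖gradient f x‖ ^ 2 ≤ 2 * L * (f x - ⨅ y, f y) := by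
  set g := gradient f x with hg
  have h := descent f hf hL hlip x (x - L⁻¹ • g)
  have hinf : ⨅ y, f y ≤ f (x - L⁻¹ • g) := ciInf_le hbdd _
  have e1 : x - L⁻¹ • g - x = -(L⁻¹ • g) := by module
  rw [e1] at h
  have e2 : ⟪g, -(L⁻¹ • g)⟫ = -(L⁻¹ * ‖g‖ ^ 2) := by
    rw [inner_neg_right, real_inner_smul_right, real_inner_self_eq_norm_sq]
  have e3 : ‖-(L⁻¹ • g)‖ ^ 2 = L⁻¹ ^ 2 * ‖g‖ ^ 2 := by
    rw [norm_neg, norm_smul, mul_pow, Real.norm_eq_abs, sq_abs]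
  rw [e2, e3] at h
  have e4 : L / 2 * (L⁻¹ ^ 2 * ‖g‖ ^ 2) = L⁻¹ / 2 * ‖g‖ ^ 2 := by
    field_simp
  have h4 : ⨅ y, f y ≤ f x - L⁻¹ / 2 * ‖g‖ ^ 2 := by linarith
  have h5 : 2 * L * (⨅ y, f y) ≤ 2 * L * (f x - L⁻¹ / 2 * ‖g‖ ^ 2) :=
    mul_le_mul_of_nonneg_left h4 (by positivity)
  have h6 : 2 * L * (f x - L⁻¹ / 2 * ‖g‖ ^ 2) = 2 * L * f x - ‖g‖ ^ 2 := by
    field_simp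
  linarith

lemma mu_le_L (f : E → ℝ) (hf : Differentiable ℝ f) {L μ : ℝ} (hL : 0 < L)
    (hlip : LipschitzWith L.toNNReal (gradient f)) (hsc : StrongConvexOn Set.univ μ f)
    (e : E) (he : ‖e‖ = 1) : μ ≤ L := by
  have hmid := hsc.2 (Set.mem_univ (0 : E)) (Set.mem_univ e)
    (by norm_num : (0:ℝ) ≤ 1/2) (by norm_num : (0:ℝ) ≤ 1/2) (by norm_num)
  set m : E := (1/2 : ℝ) • e with hm
  have hmm : (1/2 : ℝ) • (0 : E) + (1/2 : ℝ) • e = m := by module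
  rw [hmm] at hmid
  have hnorm0e : ‖(0:E) - e‖ = 1 := by rw [zero_sub, norm_neg, he]
  rw [hnorm0e] at hmid
  have h1 := descent f hf hL hlip m 0
  have h2 := descent f hf hL hlip m e
  have e0 : (0:E) - m = -m := by module
  have ee : e - m = m := by rw [hm]; module
  rw [e0, inner_neg_right] at h1
  rw [ee] at h2
  have hnm : ‖m‖ ^ 2 = 1/4 := by
    rw [hm, norm_smul, Real.norm_eq_abs, he]; norm_num
  rw [norm_neg, hnm] at h1
  rw [hnm] at h2
  simp only [smul_eq_mul] at hmid
  nlinarith [hmid, h1, h2]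

end AuxLemmas

set_option maxHeartbeats 1000000 in
/-- Lemma 2 of the paper (bound on the deterministic term T1): for `L`-smooth,
`μ`-strongly convex local losses `f k` with global objective
`F = (1/K) ∑ k f k`, minimizer `θ*`, heterogeneity gap
`Γ = F* - (1/K) ∑ k (inf f k)`, averaged true gradient `ḡ`, and step size
`0 < η ≤ 1/(6L)`, the stated inequality holds. -/
theorem stmt_12 (d K C : ℕ) (hd : 1 ≤ d) (hK : 1 ≤ K) (hC : 1 ≤ C)
    (L μ : ℝ) (hL : 0 < L) (hμ : 0 < μ)
    (f : Fin K → EuclideanSpace ℝ (Fin d) → ℝ)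
    (hdiff : ∀ k, Differentiable ℝ (f k))
    (hsmooth : ∀ k, LipschitzWith L.toNNReal (gradient (f k)))
    (hconv : ∀ k, StrongConvexOn Set.univ μ (f k))
    (hbdd : ∀ k, BddBelow (Set.range (f k)))
    (F : EuclideanSpace ℝ (Fin d) → ℝ)
    (hF : F = fun x => (1 / (K : ℝ)) * ∑ k, f k x)
    (θstar : EuclideanSpace ℝ (Fin d)) (hmin : ∀ x, F θstar ≤ F x)
    (Γ : ℝ) (hΓ : Γ = F θstar - (1 / (K : ℝ)) * ∑ k, ⨅ x, f k x)
    (θc : EuclideanSpace ℝ (Fin d)) (θ : Fin K → EuclideanSpace ℝ (Fin d))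
    (θtild : Fin C → EuclideanSpace ℝ (Fin d)) (W : Fin C → ℝ)
    (gbar : EuclideanSpace ℝ (Fin d))
    (hgbar : gbar = (1 / (K : ℝ)) • ∑ k, gradient (f k) (θ k))
    (η : ℝ) (hη0 : 0 < η) (hη : η ≤ 1 / (6 * L)) :
    ‖θc + (∑ j, W j • θtild j) - η • gbar - θstar‖ ^ 2 ≤
      (2 - μ * η) * ‖θc - θstar‖ ^ 2 + 3 * ‖∑ j, W j • θtild j‖ ^ 2
        + (2 / (K : ℝ)) * ∑ k, ‖θc - θ k‖ ^ 2
        + 6 * L * η ^ 2 * Γ - (5 * η / 3) * (F θc - F θstar) := by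
  have hK0 : (0:ℝ) < K := by exact_mod_cast Nat.lt_of_lt_of_le Nat.zero_lt_one hK
  set c : ℝ := 1 / (K : ℝ) with hc
  have hc0 : 0 < c := by positivity
  set v : EuclideanSpace ℝ (Fin d) := θc - θstar with hv
  set Sv : EuclideanSpace ℝ (Fin d) := ∑ j, W j • θtild j with hSv
  -- basic facts
  have hconv' : ∀ k, ConvexOn ℝ Set.univ (f k) := fun k =>
    (hconv k).convexOn (fun r => by positivity)
  have hμL : μ ≤ L := by
    refine mu_le_L (f ⟨0, hK⟩) (hdiff _) hL (hsmooth _) (hconv _)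
      (EuclideanSpace.single ⟨0, hd⟩ (1:ℝ)) ?_
    simp [EuclideanSpace.norm_single]
  have hLη : L * η ≤ 1/6 := by
    rw [le_div_iff₀ (by positivity)] at hη
    linarith
  have hμη : μ * η ≤ 1/6 := le_trans (mul_le_mul_of_nonneg_right hμL hη0.le) hLη
  -- abbreviations for the sums
  set P : ℝ := ∑ k, ⟪v, gradient (f k) (θ k)⟫ with hP
  set Q : ℝ := ∑ k, ‖gradient (f k) (θ k)‖ ^ 2 with hQ
  set R : ℝ := ∑ k, ‖θc - θ k‖ ^ 2 with hR
  set A1 : ℝ := ∑ k, f k θc with hA1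
  set A2 : ℝ := ∑ k, f k θstar with hA2
  set A3 : ℝ := ∑ k, ⨅ x, f k x with hA3
  have hRpos : 0 ≤ R := Finset.sum_nonneg fun k _ => by positivity
  have hFc : F θc = c * A1 := by rw [hF]
  have hFs : F θstar = c * A2 := by rw [hF]
  have hΓ' : Γ = c * A2 - c * A3 := by rw [hΓ, hFs]
  have hD : 0 ≤ A1 - A2 := by
    have h := hmin θc
    rw [hFc, hFs] at h
    have := (mul_le_mul_iff_right₀ hc0).mp h
    linarith only [this]
  -- per-k inequality A (lower bound on inner product)
  have hsumA : A1 - A2 - L/2 * R ≤ P := by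
    have step : ∀ k : Fin K, f k θc - f k θstar - L/2 * ‖θc - θ k‖ ^ 2 ≤
        ⟪v, gradient (f k) (θ k)⟫ := by
      intro k
      have h1 := descent (f k) (hdiff k) hL (hsmooth k) (θ k) θc
      have h2 := grad_ineq (f k) (hdiff k) (hconv' k) (θ k) θstar
      have e : (θc - θ k) - (θstar - θ k) = v := by rw [hv]; abel
      have h3 : ⟪v, gradient (f k) (θ k)⟫ = ⟪gradient (f k) (θ k), θc - θ k⟫
          - ⟪gradient (f k) (θ k), θstar - θ k⟫ := by
        rw [← inner_sub_right, e, real_inner_comm]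
      linarith only [h1, h2, h3]
    have := Finset.sum_le_sum (fun k (_ : k ∈ Finset.univ) => step k)
    rw [hP]
    calc A1 - A2 - L/2 * R
        = ∑ k, (f k θc - f k θstar - L/2 * ‖θc - θ k‖ ^ 2) := by
          rw [Finset.sum_sub_distrib, Finset.sum_sub_distrib, ← Finset.mul_sum, hA1, hA2, hR]
      _ ≤ _ := this
  -- per-k inequality B (upper bound on gradient norms)
  have hsumB : Q ≤ 4*L*(A1 - A3) + 2*L^2 * R := by
    have step : ∀ k : Fin K, ‖gradient (f k) (θ k)‖ ^ 2 ≤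
        4*L*(f k θc - ⨅ x, f k x) + 2*L^2 * ‖θc - θ k‖ ^ 2 := by
      intro k
      have h1 : ‖gradient (f k) (θ k) - gradient (f k) θc‖ ≤ L * ‖θc - θ k‖ := by
        have := (hsmooth k).dist_le_mul (θ k) θc
        rw [dist_eq_norm, dist_eq_norm, Real.coe_toNNReal _ hL.le] at this
        rw [norm_sub_rev θc (θ k)]
        exact this
      have h2 : ‖gradient (f k) θc‖ ^ 2 ≤ 2*L*(f k θc - ⨅ x, f k x) :=
        grad_sq (f k) (hdiff k) hL (hsmooth k) (hbdd k) θc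
      have h3 : ‖gradient (f k) (θ k)‖ ≤ ‖gradient (f k) θc‖ + L * ‖θc - θ k‖ := by
        have h5 := norm_le_norm_add_norm_sub (gradient (f k) θc) (gradient (f k) (θ k))
        rw [norm_sub_rev] at h5
        linarith
      have h6 : ‖gradient (f k) (θ k)‖ ^ 2 ≤ (‖gradient (f k) θc‖ + L * ‖θc - θ k‖) ^ 2 :=
        pow_le_pow_left₀ (norm_nonneg _) h3 2
      nlinarith only [h2, h6, sq_nonneg (‖gradient (f k) θc‖ - L * ‖θc - θ k‖)]
    have := Finset.sum_le_sum (fun k (_ : k ∈ Finset.univ) => step k)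
    rw [hQ]
    calc Q ≤ ∑ k, (4*L*(f k θc - ⨅ x, f k x) + 2*L^2 * ‖θc - θ k‖ ^ 2) := this
      _ = 4*L*(A1 - A3) + 2*L^2 * R := by
          rw [Finset.sum_add_distrib, ← Finset.mul_sum, ← Finset.mul_sum,
            Finset.sum_sub_distrib, hA1, hA3, hR]
  -- inner product identities
  have hvg : ⟪v, gbar⟫ = c * P := by
    rw [hgbar, real_inner_smul_right, inner_sum, hP]
  have hgn : ‖gbar‖ ^ 2 ≤ c * Q := by
    have h1 : ‖gbar‖ ≤ c * ∑ k, ‖gradient (f k) (θ k)‖ := by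
      rw [hgbar, norm_smul, Real.norm_eq_abs, abs_of_pos hc0]
      exact mul_le_mul_of_nonneg_left (norm_sum_le _ _) hc0.le
    have h2 : (∑ k, ‖gradient (f k) (θ k)‖) ^ 2 ≤ (K : ℝ) * Q := by
      have := sq_sum_le_card_mul_sum_sq
        (s := (Finset.univ : Finset (Fin K))) (f := fun k => ‖gradient (f k) (θ k)‖)
      simpa [hQ] using this
    have h3 : ‖gbar‖ ^ 2 ≤ (c * ∑ k, ‖gradient (f k) (θ k)‖) ^ 2 :=
      pow_le_pow_left₀ (norm_nonneg _) h1 2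
    have h4 : c * (K:ℝ) = 1 := by rw [hc]; field_simp
    calc ‖gbar‖ ^ 2 ≤ (c * ∑ k, ‖gradient (f k) (θ k)‖) ^ 2 := h3
      _ = c^2 * (∑ k, ‖gradient (f k) (θ k)‖) ^ 2 := by ring
      _ ≤ c^2 * ((K:ℝ) * Q) := by
          exact mul_le_mul_of_nonneg_left h2 (sq_nonneg c)
      _ = (c * (K:ℝ)) * (c * Q) := by ring
      _ = c * Q := by rw [h4, one_mul]
  -- expansion of the squared norm
  have hexp : ‖v - η • gbar‖ ^ 2 = ‖v‖ ^ 2 - 2*η*⟪v, gbar⟫ + η^2 * ‖gbar‖ ^ 2 := by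
    rw [norm_sub_sq_real, real_inner_smul_right, norm_smul, Real.norm_eq_abs, mul_pow, sq_abs]
    ring
  -- main bound on ‖v - η gbar‖²
  have hX : ‖v - η • gbar‖ ^ 2 ≤ ‖v‖ ^ 2 + c * (-(2*η)*(A1 - A2) + L*η*R
      + 4*L*η^2*((A1 - A2) + (A2 - A3)) + 2*L^2*η^2*R) := by
    have m1 : 2*η*c*(A1 - A2 - L/2 * R) ≤ 2*η*c*P :=
      mul_le_mul_of_nonneg_left hsumA (by positivity)
    have m2 : η^2 * ‖gbar‖^2 ≤ η^2*(c*(4*L*(A1 - A3) + 2*L^2 * R)) := by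
      have t : c * Q ≤ c * (4*L*(A1 - A3) + 2*L^2 * R) :=
        mul_le_mul_of_nonneg_left hsumB hc0.le
      exact mul_le_mul_of_nonneg_left (hgn.trans t) (sq_nonneg η)
    rw [hexp, hvg]
    linarith only [m1, m2]
  -- split of the full norm
  have hsplit : ‖θc + Sv - η • gbar - θstar‖ ^ 2 ≤ 3/2 * ‖v - η • gbar‖ ^ 2 + 3 * ‖Sv‖ ^ 2 := by
    have e : θc + Sv - η • gbar - θstar = (v - η • gbar) + Sv := by rw [hv]; abel
    rw [e, norm_add_sq_real]
    linarith only [real_inner_le_norm (v - η • gbar) Sv,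
      sq_nonneg (‖v - η • gbar‖ - 2 * ‖Sv‖)]
  -- final coefficient comparison
  have hV : 0 ≤ ‖v‖ ^ 2 := sq_nonneg _
  have key : 3/2 * (‖v‖ ^ 2 + c * (-(2*η)*(A1 - A2) + L*η*R
      + 4*L*η^2*((A1 - A2) + (A2 - A3)) + 2*L^2*η^2*R))
      ≤ (2 - μ*η) * ‖v‖ ^ 2 + 2*c*R + 6*L*η^2*(c*(A2 - A3)) - (5*η/3)*(c*(A1 - A2)) := by
    have h1 : (μ*η - 1/2) * ‖v‖ ^ 2 ≤ 0 :=
      mul_nonpos_of_nonpos_of_nonneg (by linarith) hV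
    have h2 : c*R*(3/2*(L*η) + 3*(L*η)^2 - 2) ≤ 0 := by
      have hcoef : 3/2*(L*η) + 3*(L*η)^2 - 2 ≤ 0 := by
        nlinarith only [mul_nonneg hL.le hη0.le, hLη]
      exact mul_nonpos_of_nonneg_of_nonpos (mul_nonneg hc0.le hRpos) hcoef
    have h3 : c*(A1 - A2)*(6*L*η^2 - 4/3*η) ≤ 0 := by
      have hcoef : 6*L*η^2 - 4/3*η ≤ 0 := by
        nlinarith only [mul_nonneg hL.le hη0.le, hLη, hη0]
      exact mul_nonpos_of_nonneg_of_nonpos (mul_nonneg hc0.le hD) hcoef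
    linarith only [h1, h2, h3]
  calc ‖θc + Sv - η • gbar - θstar‖ ^ 2
      ≤ 3/2 * ‖v - η • gbar‖ ^ 2 + 3 * ‖Sv‖ ^ 2 := hsplit
    _ ≤ (2 - μ*η) * ‖v‖ ^ 2 + 2*c*R + 6*L*η^2*(c*(A2 - A3)) - (5*η/3)*(c*(A1 - A2))
        + 3 * ‖Sv‖ ^ 2 := by linarith only [key, hX]
    _ ≤ (2 - μ * η) * ‖v‖ ^ 2 + 3 * ‖Sv‖ ^ 2 + 2 / (K:ℝ) * R
        + 6 * L * η ^ 2 * Γ - 5 * η / 3 * (F θc - F θstar) := by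
        have e1 : 2 / (K:ℝ) * R = 2*c*R := by rw [hc]; ring
        have e2 : Γ = c*(A2 - A3) := by rw [hΓ']; ring
        have e3 : F θc - F θstar = c*(A1 - A2) := by rw [hFc, hFs]; ring
        rw [e1, e2, e3]
        linarith only []
end
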